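/- For ω-saturated models, modal equivalence implies LHS-bisimilarity: if M and M' are ω-saturated LHS models and ⟨M,s,t⟩ and ⟨M',s',t'⟩ satisfy the same LHS formulas, then ⟨M,s,t⟩ and ⟨M',s',t'⟩ are LHS-bisimilar. -/
import Mathlib


inductive LHSForm : Type
  | pl : ℕ → LHSForm
  | pr : ℕ → LHSForm
  | I : LHSForm
  | neg : LHSForm → LHSForm
  | and : LHSForm → LHSForm → LHSForm
  | box : LHSForm → LHSForm
  | bbox : LHSForm → LHSForm
  deriving DecidableEq

def LHSForm.or (φ ψ : LHSForm) : LHSForm := .neg (.and φ.neg ψ.neg)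
def LHSForm.imp (φ ψ : LHSForm) : LHSForm := .neg (.and φ ψ.neg)
def LHSForm.iff (φ ψ : LHSForm) : LHSForm := .and (φ.imp ψ) (ψ.imp φ)
def LHSForm.dia (φ : LHSForm) : LHSForm := .neg (.box φ.neg)
def LHSForm.bdia (φ : LHSForm) : LHSForm := .neg (.bbox φ.neg)

structure LHSModel where
  W : Type
  R : W → W → Prop
  Vl : ℕ → W → Prop
  Vr : ℕ → W → Prop

def LHSModel.sat (M : LHSModel) : M.W → M.W → LHSForm → Prop
  | s, _, .pl i => M.Vl i s
  | _, t, .pr i => M.Vr i t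
  | s, t, .I => s = t
  | s, t, .neg φ => ¬ M.sat s t φ
  | s, t, .and φ ψ => M.sat s t φ ∧ M.sat s t ψ
  | s, t, .box φ => ∀ s', M.R s s' → M.sat s' t φ
  | s, t, .bbox φ => ∀ t', M.R t t' → M.sat s t' φ

/-- Z is an LHS-bisimulation between M and M'. -/
def IsBisim (M M' : LHSModel) (Z : M.W × M.W → M'.W × M'.W → Prop) : Prop :=
  ∀ s t s' t', Z (s, t) (s', t') →
    (∀ i, M.Vl i s ↔ M'.Vl i s') ∧
    (∀ i, M.Vr i t ↔ M'.Vr i t') ∧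
    (s = t ↔ s' = t') ∧
    (∀ v, M.R s v → ∃ v', M'.R s' v' ∧ Z (v, t) (v', t')) ∧
    (∀ v, M.R t v → ∃ v', M'.R t' v' ∧ Z (s, v) (s', v')) ∧
    (∀ v', M'.R s' v' → ∃ v, M.R s v ∧ Z (v, t) (v', t')) ∧
    (∀ v', M'.R t' v' → ∃ v, M.R t v ∧ Z (s, v) (s', v'))

/-- Terms of the correspondence language expanded with constants (parameters)
for elements of `W`. -/
inductive FOTerm (W : Type) : Type
  | var : ℕ → FOTerm W
  | par : W → FOTerm W

/-- Formulas of the correspondence language with parameters from `W`. -/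
inductive FOFormP (W : Type) : Type
  | pl : ℕ → FOTerm W → FOFormP W
  | pr : ℕ → FOTerm W → FOFormP W
  | rel : FOTerm W → FOTerm W → FOFormP W
  | eq : FOTerm W → FOTerm W → FOFormP W
  | neg : FOFormP W → FOFormP W
  | and : FOFormP W → FOFormP W → FOFormP W
  | imp : FOFormP W → FOFormP W → FOFormP W
  | all : ℕ → FOFormP W → FOFormP W

def FOTerm.val {W : Type} (g : ℕ → W) : FOTerm W → W
  | .var x => g x
  | .par w => w

def FOsatP (M : LHSModel) : (ℕ → M.W) → FOFormP M.W → Prop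
  | g, .pl i x => M.Vl i (x.val g)
  | g, .pr i y => M.Vr i (y.val g)
  | g, .rel x y => M.R (x.val g) (y.val g)
  | g, .eq x y => x.val g = y.val g
  | g, .neg α => ¬ FOsatP M g α
  | g, .and α β => FOsatP M g α ∧ FOsatP M g β
  | g, .imp α β => FOsatP M g α → FOsatP M g β
  | g, .all x α => ∀ w, FOsatP M (Function.update g x w) α

def FOTerm.vars {W : Type} : FOTerm W → Set ℕ
  | .var x => {x}
  | .par _ => ∅

def FOTerm.pars {W : Type} : FOTerm W → Set W
  | .var _ => ∅
  | .par w => {w}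

/-- Free variables of a formula with parameters. -/
def FOFormP.freeVars {W : Type} : FOFormP W → Set ℕ
  | .pl _ x => x.vars
  | .pr _ y => y.vars
  | .rel x y => x.vars ∪ y.vars
  | .eq x y => x.vars ∪ y.vars
  | .neg α => α.freeVars
  | .and α β => α.freeVars ∪ β.freeVars
  | .imp α β => α.freeVars ∪ β.freeVars
  | .all x α => α.freeVars \ {x}

/-- Parameters occurring in a formula. -/
def FOFormP.pars {W : Type} : FOFormP W → Set W
  | .pl _ x => x.pars
  | .pr _ y => y.pars
  | .rel x y => x.pars ∪ y.pars
  | .eq x y => x.pars ∪ y.pars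
  | .neg α => α.pars
  | .and α β => α.pars ∪ β.pars
  | .imp α β => α.pars ∪ β.pars
  | .all _ α => α.pars

/-- ω-saturation (as a first-order structure for the correspondence language):
every type Γ(x) in the single free variable `0`, with finitely many parameters,
that is finitely realized is realized. -/
def LHSModel.OmegaSaturated (M : LHSModel) : Prop :=
  ∀ Γ : Set (FOFormP M.W),
    (∀ α ∈ Γ, FOFormP.freeVars α ⊆ {0}) →
    (⋃ α ∈ Γ, FOFormP.pars α).Finite →
    (∀ Γ₀ : Finset (FOFormP M.W), ↑Γ₀ ⊆ Γ →
        ∃ w : M.W, ∀ α ∈ Γ₀, FOsatP M (fun _ => w) α) →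
    ∃ w : M.W, ∀ α ∈ Γ, FOsatP M (fun _ => w) α

/-- M is LHS-saturated. -/
def LHSModel.LHSSaturated (M : LHSModel) : Prop :=
  ∀ (Φ : Set LHSForm) (w v : M.W),
    ((∀ Φ₀ : Finset LHSForm, ↑Φ₀ ⊆ Φ →
        ∃ s, M.R w s ∧ ∀ φ ∈ Φ₀, M.sat s v φ) →
      ∃ s, M.R w s ∧ ∀ φ ∈ Φ, M.sat s v φ) ∧
    ((∀ Φ₀ : Finset LHSForm, ↑Φ₀ ⊆ Φ →
        ∃ t, M.R v t ∧ ∀ φ ∈ Φ₀, M.sat w t φ) →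
      ∃ t, M.R v t ∧ ∀ φ ∈ Φ, M.sat w t φ)

/- Auxiliary material -/

theorem FOTerm.val_update_of_lt {W : Type} (x : FOTerm W) (g : ℕ → W) (k : ℕ) (w : W)
    (h : ∀ i ∈ x.vars, i < k) : x.val (Function.update g k w) = x.val g := by
  cases x with
  | var i =>
      have : i ≠ k := Nat.ne_of_lt (h i (by simp [FOTerm.vars]))
      simp [FOTerm.val, Function.update_of_ne this]
  | par w' => rfl

/-- Standard translation of LHS formulas, with `x`,`y` terms for the two
coordinates and `k` the next fresh variable. -/
def stTr {W : Type} (k : ℕ) (x y : FOTerm W) : LHSForm → FOFormP W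
  | .pl i => .pl i x
  | .pr i => .pr i y
  | .I => .eq x y
  | .neg φ => .neg (stTr k x y φ)
  | .and φ ψ => .and (stTr k x y φ) (stTr k x y ψ)
  | .box φ => .all k (.imp (.rel x (.var k)) (stTr (k+1) (.var k) y φ))
  | .bbox φ => .all k (.imp (.rel y (.var k)) (stTr (k+1) x (.var k) φ))

theorem ST_freeVars {W : Type} (φ : LHSForm) :
    ∀ (k : ℕ) (x y : FOTerm W), (stTr k x y φ).freeVars ⊆ x.vars ∪ y.vars := by
  induction φ with
  | pl i => intro k x y; simp [stTr, FOFormP.freeVars]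
  | pr i => intro k x y; simp [stTr, FOFormP.freeVars]
  | I => intro k x y; simp [stTr, FOFormP.freeVars]
  | neg φ ih => intro k x y; exact ih k x y
  | and φ ψ ih1 ih2 =>
      intro k x y
      simp only [stTr, FOFormP.freeVars]
      exact Set.union_subset (ih1 k x y) (ih2 k x y)
  | box φ ih =>
      intro k x y
      simp only [stTr, FOFormP.freeVars]
      intro i hi
      simp only [Set.mem_diff, Set.mem_union, Set.mem_singleton_iff] at hi
      rcases hi with ⟨hi1, hi2⟩
      rcases hi1 with (h | h) | h
      · exact Or.inl h
      · exact absurd (by simpa [FOTerm.vars] using h : i = k) hi2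
      · rcases ih (k+1) (.var k) y h with h' | h'
        · exact absurd (by simpa [FOTerm.vars] using h' : i = k) hi2
        · exact Or.inr h'
  | bbox φ ih =>
      intro k x y
      simp only [stTr, FOFormP.freeVars]
      intro i hi
      simp only [Set.mem_diff, Set.mem_union, Set.mem_singleton_iff] at hi
      rcases hi with ⟨hi1, hi2⟩
      rcases hi1 with (h | h) | h
      · exact Or.inr h
      · exact absurd (by simpa [FOTerm.vars] using h : i = k) hi2
      · rcases ih (k+1) x (.var k) h with h' | h'
        · exact Or.inl h'
        · exact absurd (by simpa [FOTerm.vars] using h' : i = k) hi2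

theorem ST_pars {W : Type} (φ : LHSForm) :
    ∀ (k : ℕ) (x y : FOTerm W), (stTr k x y φ).pars ⊆ x.pars ∪ y.pars := by
  induction φ with
  | pl i => intro k x y; simp [stTr, FOFormP.pars]
  | pr i => intro k x y; simp [stTr, FOFormP.pars]
  | I => intro k x y; simp [stTr, FOFormP.pars]
  | neg φ ih => intro k x y; exact ih k x y
  | and φ ψ ih1 ih2 =>
      intro k x y
      simp only [stTr, FOFormP.pars]
      exact Set.union_subset (ih1 k x y) (ih2 k x y)
  | box φ ih =>
      intro k x y
      simp only [stTr, FOFormP.pars]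
      apply Set.union_subset
      · apply Set.union_subset
        · exact Set.subset_union_left
        · simp [FOTerm.pars]
      · intro w hw
        rcases ih (k+1) (.var k) y hw with h | h
        · simp [FOTerm.pars] at h
        · exact Or.inr h
  | bbox φ ih =>
      intro k x y
      simp only [stTr, FOFormP.pars]
      apply Set.union_subset
      · apply Set.union_subset
        · exact Set.subset_union_right
        · simp [FOTerm.pars]
      · intro w hw
        rcases ih (k+1) x (.var k) hw with h | h
        · exact Or.inl h
        · simp [FOTerm.pars] at h

theorem ST_correct (M : LHSModel) (φ : LHSForm) :
    ∀ (k : ℕ) (x y : FOTerm M.W) (g : ℕ → M.W),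
      (∀ i ∈ x.vars, i < k) → (∀ i ∈ y.vars, i < k) →
      (FOsatP M g (stTr k x y φ) ↔ M.sat (x.val g) (y.val g) φ) := by
  induction φ with
  | pl i => intro k x y g hx hy; exact Iff.rfl
  | pr i => intro k x y g hx hy; exact Iff.rfl
  | I => intro k x y g hx hy; exact Iff.rfl
  | neg φ ih => intro k x y g hx hy; exact not_congr (ih k x y g hx hy)
  | and φ ψ ih1 ih2 =>
      intro k x y g hx hy
      exact and_congr (ih1 k x y g hx hy) (ih2 k x y g hx hy)
  | box φ ih =>
      intro k x y g hx hy
      simp only [stTr, FOsatP, LHSModel.sat]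
      apply forall_congr'
      intro w
      have hx' : x.val (Function.update g k w) = x.val g :=
        FOTerm.val_update_of_lt x g k w hx
      have hy' : y.val (Function.update g k w) = y.val g :=
        FOTerm.val_update_of_lt y g k w hy
      have hvk : FOTerm.val (Function.update g k w) (FOTerm.var k : FOTerm M.W) = w := by
        simp [FOTerm.val]
      have ih' := ih (k+1) (.var k) y (Function.update g k w)
        (by intro i hi; simp [FOTerm.vars] at hi; omega)
        (fun i hi => Nat.lt_succ_of_lt (hy i hi))
      rw [hvk, hy'] at ih'
      constructor
      · intro h hr
        exact ih'.mp (h (by rw [hx', hvk]; exact hr))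
      · intro h hr
        rw [hx', hvk] at hr
        exact ih'.mpr (h hr)
  | bbox φ ih =>
      intro k x y g hx hy
      simp only [stTr, FOsatP, LHSModel.sat]
      apply forall_congr'
      intro w
      have hx' : x.val (Function.update g k w) = x.val g :=
        FOTerm.val_update_of_lt x g k w hx
      have hy' : y.val (Function.update g k w) = y.val g :=
        FOTerm.val_update_of_lt y g k w hy
      have hvk : FOTerm.val (Function.update g k w) (FOTerm.var k : FOTerm M.W) = w := by
        simp [FOTerm.val]
      have ih' := ih (k+1) x (.var k) (Function.update g k w)
        (fun i hi => Nat.lt_succ_of_lt (hx i hi))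
        (by intro i hi; simp [FOTerm.vars] at hi; omega)
      rw [hvk, hx'] at ih'
      constructor
      · intro h hr
        exact ih'.mp (h (by rw [hy', hvk]; exact hr))
      · intro h hr
        rw [hy', hvk] at hr
        exact ih'.mpr (h hr)

/-- Every ω-saturated model is LHS-saturated. -/
theorem omegaSaturated_lhsSaturated (M : LHSModel) (hM : M.OmegaSaturated) :
    M.LHSSaturated := by
  classical
  intro Φ w v
  constructor
  · -- left coordinate
    intro hfin
    set T : LHSForm → FOFormP M.W := fun φ => stTr 1 (.var 0) (.par v) φ with hT
    set Γ : Set (FOFormP M.W) :=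
      insert (FOFormP.rel (.par w) (.var 0)) (T '' Φ) with hΓ
    have hfv : ∀ α ∈ Γ, FOFormP.freeVars α ⊆ {0} := by
      intro α hα
      rcases hα with rfl | ⟨φ, hφ, rfl⟩
      · simp [FOFormP.freeVars, FOTerm.vars]
      · intro i hi
        rcases ST_freeVars φ 1 (.var 0) (.par v) hi with h | h
        · simpa [FOTerm.vars] using h
        · simp [FOTerm.vars] at h
    have hpars : (⋃ α ∈ Γ, FOFormP.pars α).Finite := by
      apply Set.Finite.subset ((Set.finite_singleton v).insert w)
      intro u hu
      simp only [Set.mem_iUnion] at hu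
      rcases hu with ⟨α, hα, hu⟩
      rcases hα with rfl | ⟨φ, hφ, rfl⟩
      · rcases hu with h | h
        · simp [FOTerm.pars] at h; simp [h]
        · simp [FOTerm.pars] at h
      · rcases ST_pars φ 1 (.var 0) (.par v) hu with h | h
        · simp [FOTerm.pars] at h
        · simp [FOTerm.pars] at h; simp [h]
    have hfinsat : ∀ Γ₀ : Finset (FOFormP M.W), ↑Γ₀ ⊆ Γ →
        ∃ a : M.W, ∀ α ∈ Γ₀, FOsatP M (fun _ => a) α := by
      intro Γ₀ hΓ₀
      set P : FOFormP M.W → Prop := fun α => ∃ φ, φ ∈ Φ ∧ T φ = α with hP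
      set pick : FOFormP M.W → LHSForm := fun α =>
        if h : P α then h.choose else LHSForm.I with hpick
      set Φ₀ : Finset LHSForm := (Γ₀.filter P).image pick with hΦ₀
      have hΦ₀sub : ↑Φ₀ ⊆ Φ := by
        intro φ hφ
        simp only [hΦ₀, Finset.coe_image, Set.mem_image, Finset.coe_filter,
          Set.mem_setOf_eq] at hφ
        rcases hφ with ⟨α, ⟨hα, hPα⟩, rfl⟩
        simp only [hpick, dif_pos hPα]
        exact hPα.choose_spec.1
      rcases hfin Φ₀ hΦ₀sub with ⟨a, haR, ha⟩
      refine ⟨a, ?_⟩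
      intro α hα
      rcases hΓ₀ hα with rfl | ⟨φ, hφ, rfl⟩
      · simpa [FOsatP, FOTerm.val] using haR
      · have hPα : P (T φ) := ⟨φ, hφ, rfl⟩
        have hmem : pick (T φ) ∈ Φ₀ :=
          Finset.mem_image_of_mem pick (Finset.mem_filter.mpr ⟨hα, hPα⟩)
        have hsat := ha _ hmem
        have hspec := hPα.choose_spec
        have hEq : T (pick (T φ)) = T φ := by
          simp only [hpick, dif_pos hPα]; exact hspec.2
        have := (ST_correct M (pick (T φ)) 1 (.var 0) (.par v) (fun _ => a)
          (by intro i hi; simp [FOTerm.vars] at hi; omega)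
          (by intro i hi; simp [FOTerm.pars, FOTerm.vars] at hi)).mpr
        have h2 : FOsatP M (fun _ => a) (T (pick (T φ))) := this (by simpa [FOTerm.val] using hsat)
        rwa [hEq] at h2
    rcases hM Γ hfv hpars hfinsat with ⟨a, ha⟩
    have haR : M.R w a := by
      have := ha _ (Set.mem_insert _ _)
      simpa [FOsatP, FOTerm.val] using this
    refine ⟨a, haR, ?_⟩
    intro φ hφ
    have := ha (T φ) (Set.mem_insert_of_mem _ ⟨φ, hφ, rfl⟩)
    have h2 := (ST_correct M φ 1 (.var 0) (.par v) (fun _ => a)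
      (by intro i hi; simp [FOTerm.vars] at hi; omega)
      (by intro i hi; simp [FOTerm.pars, FOTerm.vars] at hi)).mp this
    simpa [FOTerm.val] using h2
  · -- right coordinate
    intro hfin
    set T : LHSForm → FOFormP M.W := fun φ => stTr 1 (.par w) (.var 0) φ with hT
    set Γ : Set (FOFormP M.W) :=
      insert (FOFormP.rel (.par v) (.var 0)) (T '' Φ) with hΓ
    have hfv : ∀ α ∈ Γ, FOFormP.freeVars α ⊆ {0} := by
      intro α hα
      rcases hα with rfl | ⟨φ, hφ, rfl⟩
      · simp [FOFormP.freeVars, FOTerm.vars]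
      · intro i hi
        rcases ST_freeVars φ 1 (.par w) (.var 0) hi with h | h
        · simp [FOTerm.vars] at h
        · simpa [FOTerm.vars] using h
    have hpars : (⋃ α ∈ Γ, FOFormP.pars α).Finite := by
      apply Set.Finite.subset ((Set.finite_singleton w).insert v)
      intro u hu
      simp only [Set.mem_iUnion] at hu
      rcases hu with ⟨α, hα, hu⟩
      rcases hα with rfl | ⟨φ, hφ, rfl⟩
      · rcases hu with h | h
        · simp [FOTerm.pars] at h; simp [h]
        · simp [FOTerm.pars] at h
      · rcases ST_pars φ 1 (.par w) (.var 0) hu with h | h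
        · simp [FOTerm.pars] at h; simp [h]
        · simp [FOTerm.pars] at h
    have hfinsat : ∀ Γ₀ : Finset (FOFormP M.W), ↑Γ₀ ⊆ Γ →
        ∃ a : M.W, ∀ α ∈ Γ₀, FOsatP M (fun _ => a) α := by
      intro Γ₀ hΓ₀
      set P : FOFormP M.W → Prop := fun α => ∃ φ, φ ∈ Φ ∧ T φ = α with hP
      set pick : FOFormP M.W → LHSForm := fun α =>
        if h : P α then h.choose else LHSForm.I with hpick
      set Φ₀ : Finset LHSForm := (Γ₀.filter P).image pick with hΦ₀
      have hΦ₀sub : ↑Φ₀ ⊆ Φ := by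
        intro φ hφ
        simp only [hΦ₀, Finset.coe_image, Set.mem_image, Finset.coe_filter,
          Set.mem_setOf_eq] at hφ
        rcases hφ with ⟨α, ⟨hα, hPα⟩, rfl⟩
        simp only [hpick, dif_pos hPα]
        exact hPα.choose_spec.1
      rcases hfin Φ₀ hΦ₀sub with ⟨a, haR, ha⟩
      refine ⟨a, ?_⟩
      intro α hα
      rcases hΓ₀ hα with rfl | ⟨φ, hφ, rfl⟩
      · simpa [FOsatP, FOTerm.val] using haR
      · have hPα : P (T φ) := ⟨φ, hφ, rfl⟩
        have hmem : pick (T φ) ∈ Φ₀ :=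
          Finset.mem_image_of_mem pick (Finset.mem_filter.mpr ⟨hα, hPα⟩)
        have hsat := ha _ hmem
        have hspec := hPα.choose_spec
        have hEq : T (pick (T φ)) = T φ := by
          simp only [hpick, dif_pos hPα]; exact hspec.2
        have := (ST_correct M (pick (T φ)) 1 (.par w) (.var 0) (fun _ => a)
          (by intro i hi; simp [FOTerm.pars, FOTerm.vars] at hi)
          (by intro i hi; simp [FOTerm.vars] at hi; omega)).mpr
        have h2 : FOsatP M (fun _ => a) (T (pick (T φ))) := this (by simpa [FOTerm.val] using hsat)
        rwa [hEq] at h2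
    rcases hM Γ hfv hpars hfinsat with ⟨a, ha⟩
    have haR : M.R v a := by
      have := ha _ (Set.mem_insert _ _)
      simpa [FOsatP, FOTerm.val] using this
    refine ⟨a, haR, ?_⟩
    intro φ hφ
    have := ha (T φ) (Set.mem_insert_of_mem _ ⟨φ, hφ, rfl⟩)
    have h2 := (ST_correct M φ 1 (.par w) (.var 0) (fun _ => a)
      (by intro i hi; simp [FOTerm.pars, FOTerm.vars] at hi)
      (by intro i hi; simp [FOTerm.vars] at hi; omega)).mp this
    simpa [FOTerm.val] using h2

def bigAnd : List LHSForm → LHSForm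
  | [] => .neg (.and .I (.neg .I))
  | φ :: l => .and φ (bigAnd l)

theorem sat_bigAnd (M : LHSModel) (a b : M.W) :
    ∀ l : List LHSForm, M.sat a b (bigAnd l) ↔ ∀ φ ∈ l, M.sat a b φ := by
  intro l
  induction l with
  | nil => simp [bigAnd, LHSModel.sat]
  | cons φ l ih => simp [bigAnd, LHSModel.sat, ih]

/-- Forth step on the left coordinate, given saturation of the target. -/
theorem forth_l {M M' : LHSModel} (h' : M'.LHSSaturated)
    {a b : M.W} {a' b' : M'.W}
    (hZ : ∀ φ, M.sat a b φ ↔ M'.sat a' b' φ)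
    (v : M.W) (hv : M.R a v) :
    ∃ v', M'.R a' v' ∧ ∀ φ, M.sat v b φ ↔ M'.sat v' b' φ := by
  set Φ : Set LHSForm := {φ | M.sat v b φ} with hΦ
  have hfin : ∀ Φ₀ : Finset LHSForm, ↑Φ₀ ⊆ Φ →
      ∃ s, M'.R a' s ∧ ∀ φ ∈ Φ₀, M'.sat s b' φ := by
    intro Φ₀ hΦ₀
    have hconj : M.sat v b (bigAnd Φ₀.toList) := by
      rw [sat_bigAnd]
      intro φ hφ
      exact hΦ₀ (by simpa using hφ)
    have hdia : M.sat a b (.neg (.box (.neg (bigAnd Φ₀.toList)))) := by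
      simp only [LHSModel.sat, not_forall]
      push_neg
      exact ⟨v, hv, hconj⟩
    have hdia' := (hZ _).mp hdia
    simp only [LHSModel.sat, not_forall] at hdia'
    push_neg at hdia'
    rcases hdia' with ⟨s, hs, hsat⟩
    refine ⟨s, hs, ?_⟩
    intro φ hφ
    exact (sat_bigAnd M' s b' _).mp hsat φ (by simpa using hφ)
  rcases (h' Φ a' b').1 hfin with ⟨v', hv', hsat⟩
  refine ⟨v', hv', ?_⟩
  intro φ
  constructor
  · intro h; exact hsat φ h
  · intro h
    by_contra hc
    exact (hsat (.neg φ) hc) h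

/-- Forth step on the right coordinate. -/
theorem forth_r {M M' : LHSModel} (h' : M'.LHSSaturated)
    {a b : M.W} {a' b' : M'.W}
    (hZ : ∀ φ, M.sat a b φ ↔ M'.sat a' b' φ)
    (v : M.W) (hv : M.R b v) :
    ∃ v', M'.R b' v' ∧ ∀ φ, M.sat a v φ ↔ M'.sat a' v' φ := by
  set Φ : Set LHSForm := {φ | M.sat a v φ} with hΦ
  have hfin : ∀ Φ₀ : Finset LHSForm, ↑Φ₀ ⊆ Φ →
      ∃ t, M'.R b' t ∧ ∀ φ ∈ Φ₀, M'.sat a' t φ := by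
    intro Φ₀ hΦ₀
    have hconj : M.sat a v (bigAnd Φ₀.toList) := by
      rw [sat_bigAnd]
      intro φ hφ
      exact hΦ₀ (by simpa using hφ)
    have hdia : M.sat a b (.neg (.bbox (.neg (bigAnd Φ₀.toList)))) := by
      simp only [LHSModel.sat, not_forall]
      push_neg
      exact ⟨v, hv, hconj⟩
    have hdia' := (hZ _).mp hdia
    simp only [LHSModel.sat, not_forall] at hdia'
    push_neg at hdia'
    rcases hdia' with ⟨t, ht, hsat⟩
    refine ⟨t, ht, ?_⟩
    intro φ hφ
    exact (sat_bigAnd M' a' t _).mp hsat φ (by simpa using hφ)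
  rcases (h' Φ a' b').2 hfin with ⟨v', hv', hsat⟩
  refine ⟨v', hv', ?_⟩
  intro φ
  constructor
  · intro h; exact hsat φ h
  · intro h
    by_contra hc
    exact (hsat (.neg φ) hc) h

/-- For ω-saturated models, modal equivalence implies LHS-bisimilarity: if
⟨M,s,t⟩ and ⟨M',s',t'⟩ satisfy the same LHS formulas and both models are
ω-saturated, then the two pointed models are LHS-bisimilar. -/
theorem modal_equivalence_implies_bisim_of_omegaSaturated
    (M M' : LHSModel) (hM : M.OmegaSaturated) (hM' : M'.OmegaSaturated)
    (s t : M.W) (s' t' : M'.W)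
    (heq : ∀ φ : LHSForm, M.sat s t φ ↔ M'.sat s' t' φ) :
    ∃ Z : M.W × M.W → M'.W × M'.W → Prop,
      IsBisim M M' Z ∧ Z (s, t) (s', t') := by
  have hMs : M.LHSSaturated := omegaSaturated_lhsSaturated M hM
  have hM's : M'.LHSSaturated := omegaSaturated_lhsSaturated M' hM'
  refine ⟨fun p q => ∀ φ, M.sat p.1 p.2 φ ↔ M'.sat q.1 q.2 φ, ?_, heq⟩
  intro a b a' b' hZ
  simp only at hZ
  refine ⟨fun i => hZ (.pl i), fun i => hZ (.pr i), hZ .I, ?_, ?_, ?_, ?_⟩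
  · intro v hv
    rcases forth_l hM's hZ v hv with ⟨v', hv', h⟩
    exact ⟨v', hv', h⟩
  · intro v hv
    rcases forth_r hM's hZ v hv with ⟨v', hv', h⟩
    exact ⟨v', hv', h⟩
  · intro v' hv'
    rcases forth_l hMs (fun φ => (hZ φ).symm) v' hv' with ⟨v, hv, h⟩
    exact ⟨v, hv, fun φ => (h φ).symm⟩
  · intro v' hv'
    rcases forth_r hMs (fun φ => (hZ φ).symm) v' hv' with ⟨v, hv, h⟩
    exact ⟨v, hv, fun φ => (h φ).symm⟩
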